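/- For a fixed integer u ≥ 1, the least common multiple of the integers (un)!/(n!)^u for 1 ≤ n ≤ N grows at most exponentially in N. -/

import Mathlib

open Finset Nat

/-- The bounding number `B M = ∏_{p ≤ M prime} p ^ ⌊log_p M⌋`. -/
private def BB (M : ℕ) : ℕ := ∏ p ∈ (M + 1).primesBelow, p ^ (Nat.log p M)

private lemma BB_pos (M : ℕ) : 0 < BB M := by
  apply Finset.prod_pos
  intro p hp
  exact pow_pos (Nat.prime_of_mem_primesBelow hp).pos _

/-- Every binomial coefficient `choose m k` with `k ≤ m ≤ M` divides `BB M`. -/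
private lemma choose_dvd_BB {m k M : ℕ} (hm : m ≤ M) (hk : k ≤ m) :
    Nat.choose m k ∣ BB M := by
  have hc : Nat.choose m k ≠ 0 := (Nat.choose_pos hk).ne'
  have hsupp : (Nat.choose m k).factorization.support ⊆ (M + 1).primesBelow := by
    intro p hp
    have hp' : p ∈ (Nat.choose m k).primeFactors := by
      rwa [Nat.support_factorization] at hp
    have hpp : p.Prime := Nat.prime_of_mem_primeFactors hp'
    have hdvd : p ∣ Nat.choose m k := Nat.dvd_of_mem_primeFactors hp'
    have hdvdf : p ∣ m.factorial := by
      have : Nat.choose m k ∣ m.factorial :=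
        ⟨k.factorial * (m - k).factorial, by
          rw [← Nat.choose_mul_factorial_mul_factorial hk]; ring⟩
      exact hdvd.trans this
    have hpm : p ≤ m := (Nat.Prime.dvd_factorial hpp).mp hdvdf
    exact Nat.mem_primesBelow.mpr ⟨by omega, hpp⟩
  calc Nat.choose m k
      = (Nat.choose m k).factorization.prod (· ^ ·) :=
        (Nat.factorization_prod_pow_eq_self hc).symm
    _ = ∏ p ∈ (Nat.choose m k).factorization.support,
          p ^ ((Nat.choose m k).factorization p) := rfl
    _ ∣ ∏ p ∈ (Nat.choose m k).factorization.support, p ^ (Nat.log p M) := by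
        apply Finset.prod_dvd_prod_of_dvd
        intro p hp
        apply pow_dvd_pow
        exact (Nat.factorization_choose_le_log).trans (Nat.log_mono_right hm)
    _ ∣ BB M := Finset.prod_dvd_prod_of_subset _ _ _ hsupp

/-- The multinomial number `(k n)!/(n!)^k` divides `BB M ^ (k-1)` when `k n ≤ M`. -/
private lemma T_dvd (n M : ℕ) : ∀ k : ℕ, k * n ≤ M →
    ∃ T : ℕ, (k * n).factorial = T * n.factorial ^ k ∧ T ∣ (BB M) ^ (k - 1) := by
  intro k
  induction k with
  | zero => intro _; exact ⟨1, by simp, by simp⟩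
  | succ k ih =>
    intro hkn
    obtain ⟨T, hT, hTd⟩ := ih (le_trans (by nlinarith) hkn)
    refine ⟨Nat.choose (k * n + n) n * T, ?_, ?_⟩
    · have key := Nat.add_choose_mul_factorial_mul_factorial (k * n) n
      have h1 : (k + 1) * n = k * n + n := by ring
      rw [h1, ← key, hT, pow_succ]
      ring
    · rcases Nat.eq_zero_or_pos k with rfl | hk
      · have hT1 : T = 1 := by simpa using hT.symm
        simp [hT1, Nat.choose_self]
      · have h2 : k + 1 - 1 = (k - 1) + 1 := by omega
        have hc : Nat.choose (k * n + n) n ∣ BB M :=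
          choose_dvd_BB (by have h3 : (k+1)*n = k*n+n := by ring
                            omega)
            (Nat.le_add_left n (k * n))
        calc Nat.choose (k * n + n) n * T ∣ BB M * BB M ^ (k - 1) := mul_dvd_mul hc hTd
          _ = BB M ^ ((k - 1) + 1) := by rw [pow_succ]; ring
          _ = BB M ^ (k + 1 - 1) := by rw [h2]
      
/-- `(s+1)^2 ≤ 4^s`. -/
private lemma succ_sq_le_four_pow : ∀ s : ℕ, (s + 1) ^ 2 ≤ 4 ^ s := by
  intro s
  induction s with
  | zero => norm_num
  | succ s ih =>
    have : (s + 2) ^ 2 ≤ 4 * (s + 1) ^ 2 := by nlinarith [sq_nonneg s, Nat.zero_le s]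
    calc (s + 1 + 1) ^ 2 ≤ 4 * (s + 1) ^ 2 := this
      _ ≤ 4 * 4 ^ s := by omega
      _ = 4 ^ (s + 1) := by ring

private lemma le_four_pow_sqrt (M : ℕ) : M ≤ 4 ^ Nat.sqrt M :=
  le_of_lt (lt_of_lt_of_le (Nat.lt_succ_sqrt' M) (succ_sq_le_four_pow _))

/-- The key analytic bound: `BB M ≤ 16 ^ M`. -/
private lemma BB_le (M : ℕ) (hM : 1 ≤ M) : BB M ≤ 16 ^ M := by
  have hM0 : M ≠ 0 := by omega
  set S := (M + 1).primesBelow with hS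
  have step1 : BB M ≤ ∏ p ∈ S, (if p * p ≤ M then M else p) := by
    apply Finset.prod_le_prod'
    intro p hp
    have hpp := Nat.prime_of_mem_primesBelow hp
    by_cases h : p * p ≤ M
    · simp only [h, if_true]
      exact Nat.pow_log_le_self p hM0
    · simp only [h, if_false]
      have hlt : Nat.log p M < 2 := by
        apply Nat.log_lt_of_lt_pow hM0
        rw [pow_two]; omega
      calc p ^ Nat.log p M ≤ p ^ 1 := Nat.pow_le_pow_right hpp.pos (by omega)
        _ = p := pow_one p
  have step2 : ∏ p ∈ S, (if p * p ≤ M then M else p)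
      = (∏ p ∈ S.filter (fun p => p * p ≤ M), M) *
        (∏ p ∈ S.filter (fun p => ¬ p * p ≤ M), p) := by
    rw [Finset.prod_ite]
  have card_le : (S.filter (fun p => p * p ≤ M)).card ≤ Nat.sqrt M := by
    have hsub : S.filter (fun p => p * p ≤ M) ⊆ Finset.Icc 2 (Nat.sqrt M) := by
      intro p hp
      rw [Finset.mem_filter] at hp
      have hpp := Nat.prime_of_mem_primesBelow hp.1
      refine Finset.mem_Icc.mpr ⟨hpp.two_le, Nat.le_sqrt.mpr hp.2⟩
    calc (S.filter (fun p => p * p ≤ M)).card ≤ (Finset.Icc 2 (Nat.sqrt M)).card :=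
          Finset.card_le_card hsub
      _ = Nat.sqrt M + 1 - 2 := Nat.card_Icc 2 _
      _ ≤ Nat.sqrt M := by omega
  have first : (∏ p ∈ S.filter (fun p => p * p ≤ M), M) ≤ 4 ^ M := by
    rw [Finset.prod_const]
    calc M ^ (S.filter (fun p => p * p ≤ M)).card
        ≤ (4 ^ Nat.sqrt M) ^ (S.filter (fun p => p * p ≤ M)).card :=
          Nat.pow_le_pow_left (le_four_pow_sqrt M) _
      _ ≤ (4 ^ Nat.sqrt M) ^ Nat.sqrt M :=
          Nat.pow_le_pow_right (by positivity) card_le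
      _ = 4 ^ (Nat.sqrt M * Nat.sqrt M) := by rw [← pow_mul]
      _ ≤ 4 ^ M := Nat.pow_le_pow_right (by norm_num) (Nat.sqrt_le M)
  have second : (∏ p ∈ S.filter (fun p => ¬ p * p ≤ M), p) ≤ 4 ^ M := by
    have h1 : (∏ p ∈ S.filter (fun p => ¬ p * p ≤ M), p) ≤ ∏ p ∈ S, p := by
      apply Finset.prod_le_prod_of_subset_of_one_le' (Finset.filter_subset _ _)
      intro p hp _
      exact (Nat.prime_of_mem_primesBelow hp).one_lt.le
    have h2 : (∏ p ∈ S, p) = primorial M := by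
      rw [hS, primorial, Nat.primesBelow]
    calc (∏ p ∈ S.filter (fun p => ¬ p * p ≤ M), p) ≤ primorial M := h2 ▸ h1
      _ ≤ 4 ^ M := primorial_le_4_pow M
  calc BB M ≤ (∏ p ∈ S.filter (fun p => p * p ≤ M), M) *
        (∏ p ∈ S.filter (fun p => ¬ p * p ≤ M), p) := step2 ▸ step1
    _ ≤ 4 ^ M * 4 ^ M := Nat.mul_le_mul first second
    _ = 16 ^ M := by rw [← Nat.mul_pow]

/-- For fixed `u ≥ 1`, the lcm of the integers `(un)!/(n!)^u` for `1 ≤ n ≤ N`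
grows at most exponentially in `N`. -/
theorem lcm_multinomial_exponential_growth (u : ℕ) (hu : 1 ≤ u) :
    ∃ C : ℝ, 0 < C ∧ ∀ N : ℕ, 1 ≤ N →
      (((Finset.Icc 1 N).lcm fun n => (u * n).factorial / (n.factorial) ^ u : ℕ) : ℝ)
        ≤ C ^ N := by
  refine ⟨(16 : ℝ) ^ (u * (u - 1)), by positivity, ?_⟩
  intro N hN
  set M := u * N with hM
  have hM1 : 1 ≤ M := Nat.one_le_iff_ne_zero.mpr (by positivity)
  -- the lcm divides BB M ^ (u - 1)
  have hdvd : ((Finset.Icc 1 N).lcm fun n => (u * n).factorial / (n.factorial) ^ u)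
      ∣ (BB M) ^ (u - 1) := by
    apply Finset.lcm_dvd
    intro n hn
    have hn' : n ≤ N := (Finset.mem_Icc.mp hn).2
    obtain ⟨T, hT, hTd⟩ := T_dvd n M u (Nat.mul_le_mul_left u hn')
    have : (u * n).factorial / n.factorial ^ u = T := by
      rw [hT]
      exact Nat.mul_div_cancel _ (pow_pos (Nat.factorial_pos n) u)
    rwa [this]
  have hle : ((Finset.Icc 1 N).lcm fun n => (u * n).factorial / (n.factorial) ^ u)
      ≤ (16 ^ (u * (u - 1))) ^ N := by
    calc ((Finset.Icc 1 N).lcm fun n => (u * n).factorial / (n.factorial) ^ u)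
        ≤ (BB M) ^ (u - 1) := Nat.le_of_dvd (pow_pos (BB_pos M) _) hdvd
      _ ≤ (16 ^ M) ^ (u - 1) := Nat.pow_le_pow_left (BB_le M hM1) _
      _ = (16 ^ (u * (u - 1))) ^ N := by
          rw [← pow_mul, ← pow_mul, hM]; ring_nf
  calc (((Finset.Icc 1 N).lcm fun n => (u * n).factorial / (n.factorial) ^ u : ℕ) : ℝ)
      ≤ (((16 ^ (u * (u - 1))) ^ N : ℕ) : ℝ) := Nat.cast_le.mpr hle
    _ = ((16 : ℝ) ^ (u * (u - 1))) ^ N := by push_cast; ring
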